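/- Let $\partial$ be the degree-$(1,0)$ derivation on the exterior algebra generated by $\varphi^1,\varphi^2,\varphi^3,\varphi^4$ with $\partial\varphi^1 = 0$, $\partial\varphi^4 = -\tfrac{a}{2}\varphi^1\wedge\varphi^4$, $\partial\varphi^2 = \tfrac{-a_{11}-ia_{21}}{2}\varphi^{12} + \tfrac{-a_{13}-ia_{23}}{2}\varphi^{13} + \tfrac{v_5+iv_4}{2}\varphi^{14}$, $\partial\varphi^3 = \tfrac{a_{13}-ia_{23}}{2}\varphi^{12} + \tfrac{-a_{11}+ia_{21}}{2}\varphi^{13} + \tfrac{-v_3-iv_2}{2}\varphi^{14}$. Then $\Omega = \varphi^1\wedge\varphi^4 + \varphi^2\wedge\varphi^3$ satisfies $\partial\Omega = 0$ if and only if $a_{11} = v_2 = v_3 = v_4 = v_5 = 0$. -/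
import Mathlib
set_option maxHeartbeats 1000000


open ExteriorAlgebra in
/-- On the 8-dimensional almost abelian hypercomplex Lie algebra with the given
structure equations, `Ω = φ¹∧φ⁴ + φ²∧φ³` is `∂`-closed iff
`a₁₁ = v₂ = v₃ = v₄ = v₅ = 0`. -/
theorem stmt_16 {V : Type*} [AddCommGroup V] [Module ℂ V]
    (φ1 φ2 φ3 φ4 : V) (a a11 a21 a13 a23 v2 v3 v4 v5 : ℝ)
    (hli : LinearIndependent ℂ ![φ1, φ2, φ3, φ4])
    (D : ExteriorAlgebra ℂ V →ₗ[ℂ] ExteriorAlgebra ℂ V)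
    (hLeib : ∀ x y : V, D (ι ℂ x * ι ℂ y) = D (ι ℂ x) * ι ℂ y - ι ℂ x * D (ι ℂ y))
    (h1 : D (ι ℂ φ1) = 0)
    (h4 : D (ι ℂ φ4) = (-(a : ℂ) / 2) • (ι ℂ φ1 * ι ℂ φ4))
    (h2 : D (ι ℂ φ2) =
        ((-(a11 : ℂ) - (a21 : ℂ) * Complex.I) / 2) • (ι ℂ φ1 * ι ℂ φ2)
      + ((-(a13 : ℂ) - (a23 : ℂ) * Complex.I) / 2) • (ι ℂ φ1 * ι ℂ φ3)
      + (((v5 : ℂ) + (v4 : ℂ) * Complex.I) / 2) • (ι ℂ φ1 * ι ℂ φ4))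
    (h3 : D (ι ℂ φ3) =
        (((a13 : ℂ) - (a23 : ℂ) * Complex.I) / 2) • (ι ℂ φ1 * ι ℂ φ2)
      + ((-(a11 : ℂ) + (a21 : ℂ) * Complex.I) / 2) • (ι ℂ φ1 * ι ℂ φ3)
      + ((-(v3 : ℂ) - (v2 : ℂ) * Complex.I) / 2) • (ι ℂ φ1 * ι ℂ φ4)) :
    D (ι ℂ φ1 * ι ℂ φ4 + ι ℂ φ2 * ι ℂ φ3) = 0 ↔
      a11 = 0 ∧ v2 = 0 ∧ v3 = 0 ∧ v4 = 0 ∧ v5 = 0 := by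
  classical
  have swap : ∀ x y : V, ι ℂ x * ι ℂ y = -(ι ℂ y * ι ℂ x) := fun x y =>
    eq_neg_of_add_eq_zero_left (ι_add_mul_swap x y)
  have hD : D (ι ℂ φ1 * ι ℂ φ4 + ι ℂ φ2 * ι ℂ φ3) =
      (-(a11 : ℂ)) • (ι ℂ φ1 * (ι ℂ φ2 * ι ℂ φ3))
      + ((-(v3 : ℂ) - (v2 : ℂ) * Complex.I) / 2) • (ι ℂ φ1 * (ι ℂ φ2 * ι ℂ φ4))
      + ((-(v5 : ℂ) - (v4 : ℂ) * Complex.I) / 2) • (ι ℂ φ1 * (ι ℂ φ3 * ι ℂ φ4)) := by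
    rw [map_add, hLeib, hLeib, h1, h2, h3, h4]
    simp only [add_mul, mul_add, smul_mul_assoc, mul_smul_comm, mul_assoc,
      ι_sq_zero, mul_zero, zero_mul, smul_zero, neg_mul, mul_neg, smul_neg,
      zero_mul, add_zero, zero_add, neg_neg, zero_sub, neg_add_rev]
    have h21 : ∀ x : V, ι ℂ φ2 * (ι ℂ φ1 * ι ℂ x) = -(ι ℂ φ1 * (ι ℂ φ2 * ι ℂ x)) := by
      intro x; rw [← mul_assoc, swap φ2 φ1, neg_mul, mul_assoc]
    have h11 : ∀ x : V, ι ℂ φ1 * (ι ℂ φ1 * ι ℂ x) = 0 := by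
      intro x; rw [← mul_assoc, ι_sq_zero, zero_mul]
    rw [swap φ4 φ3]
    simp only [h21, h11, neg_zero, smul_zero, mul_neg, smul_neg, neg_neg, mul_assoc,
      ι_sq_zero, mul_zero]
    module
  constructor
  · intro h0
    have hz : (-(a11 : ℂ)) • (ι ℂ φ1 * (ι ℂ φ2 * ι ℂ φ3))
        + ((-(v3 : ℂ) - (v2 : ℂ) * Complex.I) / 2) • (ι ℂ φ1 * (ι ℂ φ2 * ι ℂ φ4))
        + ((-(v5 : ℂ) - (v4 : ℂ) * Complex.I) / 2) • (ι ℂ φ1 * (ι ℂ φ3 * ι ℂ φ4)) = 0 := by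
      rw [← hD, h0]
    obtain ⟨q, hq⟩ := (Submodule.span ℂ (Set.range ![φ1, φ2, φ3, φ4])).exists_isCompl
    set π := Submodule.linearProjOfIsCompl _ q hq with hπdef
    set f : Fin 4 → (V →ₗ[ℂ] ℂ) := fun i =>
      (Finsupp.lapply i) ∘ₗ (hli.repr.comp π) with hfdef
    have hf : ∀ i j : Fin 4, f i (![φ1, φ2, φ3, φ4] j) = if j = i then 1 else 0 := by
      intro i j
      have hmem : ![φ1, φ2, φ3, φ4] j ∈ Submodule.span ℂ (Set.range ![φ1, φ2, φ3, φ4]) :=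
        Submodule.subset_span (Set.mem_range_self j)
      have hπ : π (![φ1, φ2, φ3, φ4] j) = ⟨_, hmem⟩ :=
        Submodule.linearProjOfIsCompl_apply_left hq ⟨_, hmem⟩
      simp [hfdef, hπ, hli.repr_eq_single j ⟨_, hmem⟩ rfl, Finsupp.single_apply]
    have hf1 : ∀ i, f i φ1 = if (0 : Fin 4) = i then 1 else 0 := fun i => by simpa using hf i 0
    have hf2 : ∀ i, f i φ2 = if (1 : Fin 4) = i then 1 else 0 := fun i => by simpa using hf i 1
    have hf3 : ∀ i, f i φ3 = if (2 : Fin 4) = i then 1 else 0 := fun i => by simpa using hf i 2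
    have hf4 : ∀ i, f i φ4 = if (3 : Fin 4) = i then 1 else 0 := fun i => by simpa using hf i 3
    set A : (Fin 3 → Fin 4) → (V [⋀^Fin 3]→ₗ[ℂ] ℂ) := fun S =>
      (Matrix.detRowAlternating).compLinearMap (LinearMap.pi fun k => f (S k)) with hAdef
    set L : (Fin 3 → Fin 4) → (ExteriorAlgebra ℂ V →ₗ[ℂ] ℂ) := fun S =>
      liftAlternating (Function.update (fun _ => 0) 3 (A S)) with hLdef
    have hιM : ∀ x y z : V, ι ℂ x * (ι ℂ y * ι ℂ z) = ιMulti ℂ 3 ![x, y, z] := by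
      intro x y z
      simp [ExteriorAlgebra.ιMulti_apply, List.ofFn_succ, mul_assoc]
    have hL : ∀ (S : Fin 3 → Fin 4) (x y z : V),
        L S (ι ℂ x * (ι ℂ y * ι ℂ z)) = A S ![x, y, z] := by
      intro S x y z
      rw [hιM, hLdef]
      rw [liftAlternating_apply_ιMulti]
      rw [Function.update_self]
    have key : ∀ S : Fin 3 → Fin 4,
        (-(a11 : ℂ)) * A S ![φ1, φ2, φ3]
        + ((-(v3 : ℂ) - (v2 : ℂ) * Complex.I) / 2) * A S ![φ1, φ2, φ4]
        + ((-(v5 : ℂ) - (v4 : ℂ) * Complex.I) / 2) * A S ![φ1, φ3, φ4] = 0 := by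
      intro S
      have h := congrArg (L S) hz
      rw [map_add, map_add, map_smul, map_smul, map_smul, map_zero, hL, hL, hL,
        smul_eq_mul, smul_eq_mul, smul_eq_mul] at h
      exact h
    have hAval : ∀ (S : Fin 3 → Fin 4) (x y z : V),
        A S ![x, y, z] = Matrix.det (Matrix.of fun k l : Fin 3 => f (S l) (![x, y, z] k)) := by
      intro S x y z
      rfl
    have k1 := key ![0, 1, 2]
    have k2 := key ![0, 1, 3]
    have k3 := key ![0, 2, 3]
    rw [hAval, hAval, hAval] at k1 k2 k3
    simp only [Matrix.det_fin_three, Matrix.of_apply, Matrix.cons_val_zero, Matrix.cons_val_one,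
      Matrix.head_cons, Matrix.cons_val_two, Matrix.tail_cons, hf1, hf2, hf3, hf4] at k1 k2 k3
    simp only [Fin.reduceEq, reduceIte, if_true, if_false] at k1 k2 k3
    norm_num at k1 k2 k3
    have e2 : (-(v3 : ℂ) - (v2 : ℂ) * Complex.I) = 0 := by linear_combination k2
    have e3 : (-(v5 : ℂ) - (v4 : ℂ) * Complex.I) = 0 := by linear_combination k3
    have hv3 : v3 = 0 ∧ v2 = 0 := by
      constructor <;> [have := congrArg Complex.re e2; have := congrArg Complex.im e2] <;>
        simpa using this
    have hv5 : v5 = 0 ∧ v4 = 0 := by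
      constructor <;> [have := congrArg Complex.re e3; have := congrArg Complex.im e3] <;>
        simpa using this
    exact ⟨k1, hv3.2, hv3.1, hv5.2, hv5.1⟩
  · rintro ⟨ha, hv2, hv3, hv4, hv5⟩
    rw [hD]
    simp [ha, hv2, hv3, hv4, hv5]
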